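/- Let P be a finite poset on [n], λ ∈ ℝ^n_{>0}, and let σ: [n] → [n] be a linear extension of P (a bijection such that j ≺ i in P implies σ^{-1}(j) < σ^{-1}(i)). Let C_k = {σ(1),...,σ(k)} for k = 0,...,n. Then ∫_{{t ∈ ℝ^n : 0 < t_{σ(1)} < t_{σ(2)} < ⋯ < t_{σ(n)}}} ∏_{i=1}^n λ_i exp(−λ_i (t_i − max_{j ∈ pa(i)} t_j)) dt = λ_1 ⋯ λ_n · ∏_{k=0}^{n−1} 1/λ_{Exit(C_k)}. -/

import Mathlib

open MeasureTheory

/-- The maximum of `t` over the strict predecessors of `i` in the poset given by the strict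
order relation `P`, with the convention that the maximum over the empty set is `0`. -/
noncomputable def maxPa {n : ℕ} (P : Fin n → Fin n → Prop) (t : Fin n → ℝ) (i : Fin n) : ℝ :=
  sSup (insert 0 (t '' {j | P j i}))

/-- `S` is an order ideal (lower set) of the strict order `P`. -/
def IsOrderIdeal {n : ℕ} (P : Fin n → Fin n → Prop) (S : Finset (Fin n)) : Prop :=
  ∀ p q : Fin n, P p q → q ∈ S → p ∈ S

open scoped Classical in
/-- `Exit(S)`: the events not in `S` that can occur next. -/
noncomputable def exitSet {n : ℕ} (P : Fin n → Fin n → Prop) (S : Finset (Fin n)) :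
    Finset (Fin n) :=
  Finset.univ.filter (fun j => j ∉ S ∧ IsOrderIdeal P (insert j S))

/-- `λ_T = Σ_{j ∈ T} λ_j`. -/
def rateSum {n : ℕ} (lam : Fin n → ℝ) (T : Finset (Fin n)) : ℝ := ∑ j ∈ T, lam j

/-- `C_k = {σ(1), …, σ(k)}`, the set of the first `k` values of the permutation `σ`. -/
def chainSet {n : ℕ} (σ : Equiv.Perm (Fin n)) (k : ℕ) : Finset (Fin n) :=
  Finset.univ.filter (fun m => ((σ.symm m : ℕ) < k))


section Aux
open Finset

noncomputable def cumM {n : ℕ} (σ : Equiv.Perm (Fin n)) : Matrix (Fin n) (Fin n) ℝ :=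
  fun i k => if k ≤ σ.symm i then 1 else 0

lemma cumM_apply {n : ℕ} (σ : Equiv.Perm (Fin n)) (u : Fin n → ℝ) (i : Fin n) :
    Matrix.toLin' (cumM σ) u i = ∑ k ∈ Iic (σ.symm i), u k := by
  have : Iic (σ.symm i) = univ.filter (· ≤ σ.symm i) := by ext k; simp
  rw [this, Finset.sum_filter]
  simp [Matrix.toLin'_apply, Matrix.mulVec, dotProduct, cumM, ite_mul]

lemma cumM_det_abs {n : ℕ} (σ : Equiv.Perm (Fin n)) : |(cumM σ).det| = 1 := by
  have hL : (Matrix.of (fun a k : Fin n => if k ≤ a then (1:ℝ) else 0)).det = 1 := by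
    rw [Matrix.det_of_lowerTriangular]
    · simp
    · intro i j hij
      simp only [Matrix.of_apply, ite_eq_right_iff]
      intro h
      exact absurd h (not_le.mpr hij)
  have h2 : cumM σ = (Matrix.of (fun a k : Fin n => if k ≤ a then (1:ℝ) else 0)).submatrix σ.symm id := rfl
  rw [h2, Matrix.det_permute, hL, mul_one]
  rcases Int.units_eq_one_or (Equiv.Perm.sign σ.symm) with h | h <;> simp [h]

lemma cumM_det_ne {n : ℕ} (σ : Equiv.Perm (Fin n)) : (cumM σ).det ≠ 0 := by
  intro h
  have := cumM_det_abs σ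
  rw [h, abs_zero] at this
  norm_num at this

lemma cumM_mp {n : ℕ} (σ : Equiv.Perm (Fin n)) :
    MeasurePreserving (Matrix.toLin' (cumM σ)) volume volume := by
  constructor
  · exact (LinearMap.continuous_on_pi _).measurable
  · rw [Real.map_matrix_volume_pi_eq_smul_volume_pi (cumM_det_ne σ), abs_inv, cumM_det_abs]
    simp

lemma cumM_emb {n : ℕ} (σ : Equiv.Perm (Fin n)) :
    MeasurableEmbedding (Matrix.toLin' (cumM σ)) := by
  have hdet : LinearMap.det (Matrix.toLin' (cumM σ)) ≠ 0 := by
    rw [LinearMap.det_toLin']; exact cumM_det_ne σ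
  have : ⇑(Matrix.toLin' (cumM σ)) = ⇑((LinearMap.equivOfDetNeZero (Matrix.toLin' (cumM σ)) hdet).toContinuousLinearEquiv.toHomeomorph) := by
    funext x; rfl
  rw [this]
  exact ((LinearMap.equivOfDetNeZero (Matrix.toLin' (cumM σ)) hdet).toContinuousLinearEquiv.toHomeomorph).measurableEmbedding

lemma cumM_image {n : ℕ} (σ : Equiv.Perm (Fin n)) :
    Matrix.toLin' (cumM σ) '' (Set.univ.pi fun _ : Fin n => Set.Ioi (0:ℝ)) =
      {t : Fin n → ℝ | (∀ k, 0 < t (σ k)) ∧ ∀ k l : Fin n, k < l → t (σ k) < t (σ l)} := by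
  ext t
  constructor
  · rintro ⟨u, hu, rfl⟩
    have hu' : ∀ k, 0 < u k := fun k => hu k (Set.mem_univ k)
    have hval : ∀ k, Matrix.toLin' (cumM σ) u (σ k) = ∑ j ∈ Iic k, u j := by
      intro k; rw [cumM_apply, Equiv.symm_apply_apply]
    constructor
    · intro k
      rw [hval]
      exact Finset.sum_pos (fun j _ => hu' j) ⟨k, Finset.mem_Iic.mpr le_rfl⟩
    · intro k l hkl
      rw [hval, hval]
      exact Finset.sum_lt_sum_of_subset (Finset.Iic_subset_Iic.mpr hkl.le)
        (Finset.mem_Iic.mpr le_rfl) (by simpa using hkl) (hu' l) (fun j _ _ => (hu' j).le)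
  · rintro ⟨h1, h2⟩
    classical
    set u : Fin n → ℝ := fun k => if h : (k : ℕ) = 0 then t (σ k) else
      t (σ k) - t (σ ⟨(k : ℕ) - 1, lt_of_le_of_lt (Nat.pred_le _) k.isLt⟩) with hudef
    refine ⟨u, ?_, ?_⟩
    · intro k _
      by_cases h : (k : ℕ) = 0
      · simpa [hudef, h] using h1 k
      · have hlt : (⟨(k : ℕ) - 1, lt_of_le_of_lt (Nat.pred_le _) k.isLt⟩ : Fin n) < k := by
          rw [Fin.lt_def]; simp; omega
        simp only [hudef, dif_neg h]
        exact Set.mem_Ioi.mpr (sub_pos.mpr (h2 _ _ hlt))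
    · have key : ∀ m : ℕ, ∀ hm : m < n, ∑ j ∈ Iic (⟨m, hm⟩ : Fin n), u j = t (σ ⟨m, hm⟩) := by
        intro m
        induction m with
        | zero =>
          intro hm
          have hs : Iic (⟨0, hm⟩ : Fin n) = {⟨0, hm⟩} := by
            ext j; simp [Fin.le_def, Fin.ext_iff]
          rw [hs, Finset.sum_singleton]
          simp [hudef]
        | succ m ih =>
          intro hm
          have hm' : m < n := lt_trans (Nat.lt_succ_self m) hm
          have hins : Iic (⟨m+1, hm⟩ : Fin n) = insert (⟨m+1, hm⟩ : Fin n) (Iic (⟨m, hm'⟩ : Fin n)) := by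
            ext j; simp [Fin.le_def, Fin.ext_iff]; omega
          have hnm : (⟨m+1, hm⟩ : Fin n) ∉ Iic (⟨m, hm'⟩ : Fin n) := by
            simp [Fin.le_def]
          rw [hins, Finset.sum_insert hnm, ih hm']
          have : u ⟨m+1, hm⟩ = t (σ ⟨m+1, hm⟩) - t (σ ⟨m, hm'⟩) := by
            simp only [hudef, dif_neg (Nat.succ_ne_zero m)]
            congr 2
          rw [this]; ring
      funext i
      rw [cumM_apply]
      have h := key (σ.symm i) (σ.symm i).isLt
      simpa using h

lemma exitSet_char {n : ℕ} {P : Fin n → Fin n → Prop} (hirr : ∀ i, ¬ P i i)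
    {σ : Equiv.Perm (Fin n)} (hlin : ∀ i j : Fin n, P j i → σ.symm j < σ.symm i)
    (m : ℕ) (i : Fin n) :
    i ∈ exitSet P (chainSet σ m) ↔
      m ≤ (σ.symm i : ℕ) ∧ ∀ j, P j i → (σ.symm j : ℕ) < m := by
  classical
  simp only [exitSet, Finset.mem_filter, Finset.mem_univ, true_and]
  constructor
  · rintro ⟨hni, hid⟩
    refine ⟨by simpa [chainSet] using hni, fun j hj => ?_⟩
    have h := hid j i hj (Finset.mem_insert_self i _)
    rcases Finset.mem_insert.mp h with h | h
    · exact absurd (h ▸ hj) (hirr i)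
    · simpa [chainSet] using h
  · rintro ⟨h1, h2⟩
    constructor
    · simpa [chainSet] using h1
    · intro p q hpq hq
      rcases Finset.mem_insert.mp hq with rfl | hq'
      · refine Finset.mem_insert.mpr (Or.inr ?_)
        simp only [chainSet, Finset.mem_filter, Finset.mem_univ, true_and]
        exact h2 p hpq
      · have hq2 : (σ.symm q : ℕ) < m := by simpa [chainSet] using hq'
        have hp := Fin.lt_def.mp (hlin q p hpq)
        refine Finset.mem_insert.mpr (Or.inr ?_)
        simp only [chainSet, Finset.mem_filter, Finset.mem_univ, true_and]
        omega

open scoped Classical in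
lemma maxPa_cum {n : ℕ} (P : Fin n → Fin n → Prop) (σ : Equiv.Perm (Fin n))
    (u : Fin n → ℝ) (hu : ∀ k, 0 ≤ u k) (i : Fin n) :
    maxPa P (Matrix.toLin' (cumM σ) u) i =
      ∑ k ∈ univ.filter (fun k => ∃ j, P j i ∧ k ≤ σ.symm j), u k := by
  set t := Matrix.toLin' (cumM σ) u with ht
  by_cases hD : (univ.filter fun j => P j i).Nonempty
  · obtain ⟨j0, hj0mem, hj0max⟩ := Finset.exists_max_image _ σ.symm hD
    have hPj0 : P j0 i := (Finset.mem_filter.mp hj0mem).2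
    have hB : univ.filter (fun k => ∃ j, P j i ∧ k ≤ σ.symm j) = Iic (σ.symm j0) := by
      ext k
      simp only [Finset.mem_filter, Finset.mem_univ, true_and, Finset.mem_Iic]
      constructor
      · rintro ⟨j, hPj, hk⟩
        exact hk.trans (hj0max j (Finset.mem_filter.mpr ⟨Finset.mem_univ j, hPj⟩))
      · intro h; exact ⟨j0, hPj0, h⟩
    rw [hB, ← cumM_apply σ u j0, ← ht]
    apply IsGreatest.csSup_eq
    constructor
    · exact Set.mem_insert_iff.mpr (Or.inr ⟨j0, hPj0, rfl⟩)
    · rintro x hx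
      rcases Set.mem_insert_iff.mp hx with rfl | ⟨j, hPj, rfl⟩
      · rw [ht, cumM_apply]
        exact Finset.sum_nonneg fun k _ => hu k
      · rw [ht, cumM_apply, cumM_apply]
        exact Finset.sum_le_sum_of_subset_of_nonneg
          (Finset.Iic_subset_Iic.mpr (hj0max j (Finset.mem_filter.mpr ⟨Finset.mem_univ j, hPj⟩)))
          (fun k _ _ => hu k)
  · have hempty : {j | P j i} = ∅ := by
      ext j
      simp only [Set.mem_setOf_eq, Set.mem_empty_iff_false, iff_false]
      intro hj
      exact hD ⟨j, Finset.mem_filter.mpr ⟨Finset.mem_univ j, hj⟩⟩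
    have hB : univ.filter (fun k => ∃ j, P j i ∧ k ≤ σ.symm j) = ∅ := by
      ext k
      simp only [Finset.mem_filter, Finset.mem_univ, true_and, Finset.notMem_empty, iff_false]
      rintro ⟨j, hPj, -⟩
      exact hD ⟨j, Finset.mem_filter.mpr ⟨Finset.mem_univ j, hPj⟩⟩
    rw [hB, maxPa, hempty]
    simp

open scoped Classical in
lemma exp_ident {n : ℕ} (P : Fin n → Fin n → Prop) (hirr : ∀ i, ¬ P i i)
    (lam : Fin n → ℝ) (σ : Equiv.Perm (Fin n))
    (hlin : ∀ i j : Fin n, P j i → σ.symm j < σ.symm i)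
    (u : Fin n → ℝ) (hu : ∀ k, 0 ≤ u k) :
    ∑ i, lam i * (Matrix.toLin' (cumM σ) u i - maxPa P (Matrix.toLin' (cumM σ) u) i) =
      ∑ k : Fin n, rateSum lam (exitSet P (chainSet σ (k : ℕ))) * u k := by
  set G : Fin n → Finset (Fin n) :=
    fun i => Iic (σ.symm i) \ univ.filter (fun k => ∃ j, P j i ∧ k ≤ σ.symm j) with hG
  have hBsub : ∀ i, univ.filter (fun k => ∃ j, P j i ∧ k ≤ σ.symm j) ⊆ Iic (σ.symm i) := by
    intro i k hk
    simp only [Finset.mem_filter, Finset.mem_univ, true_and] at hk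
    obtain ⟨j, hPj, hkj⟩ := hk
    exact Finset.mem_Iic.mpr (le_of_lt (lt_of_le_of_lt hkj (hlin i j hPj)))
  have hdiff : ∀ i, Matrix.toLin' (cumM σ) u i - maxPa P (Matrix.toLin' (cumM σ) u) i =
      ∑ k ∈ G i, u k := by
    intro i
    rw [cumM_apply, maxPa_cum P σ u hu i, hG, Finset.sum_sdiff_eq_sub (hBsub i)]
  calc ∑ i, lam i * (Matrix.toLin' (cumM σ) u i - maxPa P (Matrix.toLin' (cumM σ) u) i)
      = ∑ i : Fin n, ∑ k ∈ G i, lam i * u k := by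
        refine Finset.sum_congr rfl fun i _ => ?_
        rw [hdiff i, Finset.mul_sum]
    _ = ∑ i : Fin n, ∑ k : Fin n, if k ∈ G i then lam i * u k else 0 := by
        refine Finset.sum_congr rfl fun i _ => ?_
        rw [Finset.sum_ite_mem, Finset.univ_inter]
    _ = ∑ k : Fin n, ∑ i : Fin n, if k ∈ G i then lam i * u k else 0 := Finset.sum_comm
    _ = ∑ k : Fin n, ∑ i ∈ univ.filter (fun i => k ∈ G i), lam i * u k := by
        refine Finset.sum_congr rfl fun k _ => ?_
        rw [Finset.sum_filter]
    _ = ∑ k : Fin n, rateSum lam (exitSet P (chainSet σ (k : ℕ))) * u k := by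
        refine Finset.sum_congr rfl fun k _ => ?_
        have hset : univ.filter (fun i => k ∈ G i) = exitSet P (chainSet σ (k : ℕ)) := by
          ext i
          rw [exitSet_char hirr hlin]
          simp only [hG, Finset.mem_filter, Finset.mem_univ, true_and, Finset.mem_sdiff,
            Finset.mem_Iic, not_exists, not_and, not_le, Fin.le_def, Fin.lt_def]
        rw [hset, rateSum, Finset.sum_mul]

lemma exp_int {c : ℝ} (hc : 0 < c) : ∫ x in Set.Ioi (0:ℝ), Real.exp (-(c * x)) = c⁻¹ := by
  have h := MeasureTheory.integral_comp_mul_left_Ioi (fun y => Real.exp (-y)) 0 hc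
  rw [mul_zero] at h
  rw [h, integral_exp_neg_Ioi]
  simp

lemma exit_pos {n : ℕ} {P : Fin n → Fin n → Prop} (hirr : ∀ i, ¬ P i i)
    {lam : Fin n → ℝ} (hlam : ∀ i, 0 < lam i) {σ : Equiv.Perm (Fin n)}
    (hlin : ∀ i j : Fin n, P j i → σ.symm j < σ.symm i) (k : Fin n) :
    0 < rateSum lam (exitSet P (chainSet σ (k : ℕ))) := by
  have hk : σ k ∈ exitSet P (chainSet σ (k : ℕ)) := by
    rw [exitSet_char hirr hlin]
    constructor
    · simp
    · intro j hj
      have := Fin.lt_def.mp (hlin (σ k) j hj)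
      simpa using this
  exact Finset.sum_pos (fun j _ => hlam j) ⟨σ k, hk⟩


end Aux

/-- For a linear extension `σ` of the poset `P`, the integral of the CT-CBN density over the
cone `0 < t_{σ(1)} < ⋯ < t_{σ(n)}` equals `λ_1 ⋯ λ_n ∏_{k=0}^{n−1} 1/λ_{Exit(C_k)}` with
`C_k = {σ(1), …, σ(k)}`. -/
theorem stmt16 {n : ℕ} (P : Fin n → Fin n → Prop)
    (hirr : ∀ i, ¬ P i i) (htrans : ∀ i j k, P i j → P j k → P i k)
    (lam : Fin n → ℝ) (hlam : ∀ i, 0 < lam i)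
    (σ : Equiv.Perm (Fin n))
    (hlin : ∀ i j : Fin n, P j i → σ.symm j < σ.symm i) :
    (∫ t in {t : Fin n → ℝ | (∀ k, 0 < t (σ k)) ∧ ∀ k l : Fin n, k < l → t (σ k) < t (σ l)},
        ∏ i, lam i * Real.exp (-(lam i) * (t i - maxPa P t i))) =
      (∏ i, lam i) * ∏ k ∈ Finset.range n, (rateSum lam (exitSet P (chainSet σ k)))⁻¹ := by
  classical
  rw [← cumM_image σ, (cumM_mp σ).setIntegral_image_emb (cumM_emb σ)]
  set A := Set.univ.pi fun _ : Fin n => Set.Ioi (0:ℝ) with hA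
  have hAm : MeasurableSet A := MeasurableSet.univ_pi fun _ => measurableSet_Ioi
  have hcongr : Set.EqOn
      (fun u => ∏ i, lam i * Real.exp (-(lam i) *
        (Matrix.toLin' (cumM σ) u i - maxPa P (Matrix.toLin' (cumM σ) u) i)))
      (fun u => (∏ i, lam i) *
        ∏ k : Fin n, Real.exp (-(rateSum lam (exitSet P (chainSet σ (k : ℕ))) * u k))) A := by
    intro u hu
    have hu' : ∀ k, 0 ≤ u k := fun k => le_of_lt (hu k (Set.mem_univ k))
    simp only
    rw [Finset.prod_mul_distrib, ← Real.exp_sum, ← Real.exp_sum]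
    congr 1
    rw [Real.exp_eq_exp]
    simp only [neg_mul, Finset.sum_neg_distrib]
    exact congrArg Neg.neg (exp_ident P hirr lam σ hlin u hu')
  rw [MeasureTheory.setIntegral_congr_fun hAm hcongr, MeasureTheory.integral_const_mul]
  congr 1
  rw [← MeasureTheory.integral_indicator hAm]
  have hind : A.indicator
      (fun u => ∏ k : Fin n, Real.exp (-(rateSum lam (exitSet P (chainSet σ (k : ℕ))) * u k))) =
      fun u => ∏ k : Fin n, (Set.Ioi (0:ℝ)).indicator
        (fun x => Real.exp (-(rateSum lam (exitSet P (chainSet σ (k : ℕ))) * x))) (u k) := by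
    funext u
    by_cases hu : u ∈ A
    · rw [Set.indicator_of_mem hu]
      refine Finset.prod_congr rfl fun k _ => ?_
      have hm : u k ∈ Set.Ioi (0:ℝ) := hu k (Set.mem_univ k)
      exact (Set.indicator_of_mem hm
        (fun x => Real.exp (-(rateSum lam (exitSet P (chainSet σ (k : ℕ))) * x)))).symm
    · rw [Set.indicator_of_notMem hu]
      have hex : ∃ k, u k ∉ Set.Ioi (0:ℝ) := by
        by_contra hcon
        push_neg at hcon
        exact hu fun k _ => hcon k
      obtain ⟨k, hk⟩ := hex
      exact (Finset.prod_eq_zero (Finset.mem_univ k) (Set.indicator_of_notMem hk _)).symm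
  rw [hind, MeasureTheory.integral_fintype_prod_volume_eq_prod (ι := Fin n)
    (f := fun k x => (Set.Ioi (0:ℝ)).indicator
      (fun x => Real.exp (-(rateSum lam (exitSet P (chainSet σ (k : ℕ))) * x))) x),
    ← Fin.prod_univ_eq_prod_range (fun k => (rateSum lam (exitSet P (chainSet σ k)))⁻¹) n]
  refine Finset.prod_congr rfl fun k _ => ?_
  rw [MeasureTheory.integral_indicator measurableSet_Ioi]
  exact exp_int (exit_pos hirr hlam hlin k)
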